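/- Suppose sprank(A^S) = n and A ∈ A^S satisfies the matching property: rank(A_T) = sprank(A^S_T) for every subset T ⊆ {1,…,m}. Then cospark(A) = spcospark(A^S). -/
import Mathlib


open Matrix MeasureTheory

/-- `A` has sparsity pattern `S`: the nonzero entries of `A` are exactly those indexed by `S`. -/
def HasPattern {m n : ℕ} (S : Finset (Fin m × Fin n)) (A : Matrix (Fin m) (Fin n) ℝ) : Prop :=
  ∀ i j, A i j ≠ 0 ↔ (i, j) ∈ S

/-- Generic rank of the class of matrices with sparsity pattern `S`. -/
noncomputable def sprank {m n : ℕ} (S : Finset (Fin m × Fin n)) : ℕ :=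
  sSup {r : ℕ | ∃ A : Matrix (Fin m) (Fin n) ℝ, HasPattern S A ∧ A.rank = r}

/-- The sparsity pattern restricted to the rows in `T` (rows outside `T` become zero). -/
def patternOn {m n : ℕ} (S : Finset (Fin m × Fin n)) (T : Finset (Fin m)) :
    Finset (Fin m × Fin n) :=
  S.filter (fun p => p.1 ∈ T)

/-- A matching of a sparsity pattern: any two distinct pairs differ in both coordinates. -/
def IsMatching {m n : ℕ} (M : Finset (Fin m × Fin n)) : Prop :=
  ∀ p ∈ M, ∀ q ∈ M, p ≠ q → p.1 ≠ q.1 ∧ p.2 ≠ q.2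

/-- `nu S` : maximum cardinality of a matching contained in `S`. -/
noncomputable def nu {m n : ℕ} (S : Finset (Fin m × Fin n)) : ℕ :=
  sSup {k : ℕ | ∃ M ⊆ S, IsMatching M ∧ M.card = k}

/-- ℓ₀ "norm": number of nonzero entries of a vector. -/
noncomputable def l0 {m : ℕ} (y : Fin m → ℝ) : ℕ :=
  (Finset.univ.filter (fun i => y i ≠ 0)).card

/-- `cospark A` : minimum of `‖A x‖₀` over nonzero `x`. -/
noncomputable def cospark {m n : ℕ} (A : Matrix (Fin m) (Fin n) ℝ) : ℕ :=
  sInf {k : ℕ | ∃ x : Fin n → ℝ, x ≠ 0 ∧ l0 (A.mulVec x) = k}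

/-- Generic cospark of the class of matrices with sparsity pattern `S`. -/
noncomputable def spcospark {m n : ℕ} (S : Finset (Fin m × Fin n)) : ℕ :=
  sSup {k : ℕ | ∃ A : Matrix (Fin m) (Fin n) ℝ, HasPattern S A ∧ cospark A = k}

/-- The row-submatrix `A_T`, realized as `A` with the rows outside `T` zeroed out. -/
noncomputable def rowRestrict {m n : ℕ} (A : Matrix (Fin m) (Fin n) ℝ) (T : Finset (Fin m)) :
    Matrix (Fin m) (Fin n) ℝ :=
  Matrix.of fun i j => if i ∈ T then A i j else 0

/-- `X_W` : the rows of the pattern `S` all of whose nonzero positions lie in the columns `W`. -/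
def rowsIn {m n : ℕ} (S : Finset (Fin m × Fin n)) (W : Finset (Fin n)) : Finset (Fin m) :=
  Finset.univ.filter (fun i => ∀ j, (i, j) ∈ S → j ∈ W)


lemma rank_rn {m n : ℕ} (B : Matrix (Fin m) (Fin n) ℝ) :
    B.rank + Module.finrank ℝ (LinearMap.ker B.mulVecLin) = n := by
  have := LinearMap.finrank_range_add_finrank_ker B.mulVecLin
  rw [Matrix.rank]
  simpa using this

lemma rank_lt_of_ker {m n : ℕ} (B : Matrix (Fin m) (Fin n) ℝ) {x : Fin n → ℝ}
    (hx : x ≠ 0) (h : B.mulVec x = 0) : B.rank < n := by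
  have h1 := rank_rn B
  have hk : 0 < Module.finrank ℝ (LinearMap.ker B.mulVecLin) := by
    rw [Module.finrank_pos_iff]
    exact nontrivial_of_ne ⟨x, by simpa [Matrix.mulVecLin_apply] using h⟩ 0
      (by simp [Subtype.ext_iff]; exact hx)
  omega

lemma exists_ker {m n : ℕ} (B : Matrix (Fin m) (Fin n) ℝ) (h : B.rank < n) :
    ∃ x : Fin n → ℝ, x ≠ 0 ∧ B.mulVec x = 0 := by
  have h1 := rank_rn B
  have hk : 0 < Module.finrank ℝ (LinearMap.ker B.mulVecLin) := by omega
  rw [Module.finrank_pos_iff] at hk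
  obtain ⟨⟨x, hx⟩, hx0⟩ := exists_ne (0 : LinearMap.ker B.mulVecLin)
  refine ⟨x, ?_, by simpa [Matrix.mulVecLin_apply] using hx⟩
  simpa [Subtype.ext_iff] using hx0

lemma rowRestrict_mulVec {m n : ℕ} (C : Matrix (Fin m) (Fin n) ℝ) (T : Finset (Fin m))
    (v : Fin n → ℝ) (i : Fin m) :
    (Matrix.of fun i j => if i ∈ T then C i j else 0).mulVec v i
      = if i ∈ T then C.mulVec v i else 0 := by
  by_cases hi : i ∈ T <;> simp [Matrix.mulVec, dotProduct, hi]

/-- if `sprank S = n` and `A ∈ A^S` satisfies the matching property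
(`rank(A_T) = sprank (A^S_T)` for every set of rows `T`), then `cospark A = spcospark S`. -/
theorem stmt2 {m n : ℕ} (hn : 1 ≤ n) (hmn : n < m) (S : Finset (Fin m × Fin n))
    (hspr : sprank S = n) (A : Matrix (Fin m) (Fin n) ℝ) (hA : HasPattern S A)
    (hmatch : ∀ T : Finset (Fin m), (rowRestrict A T).rank = sprank (patternOn S T)) :
    cospark A = spcospark S := by
  -- the cospark set of A is nonempty
  have hne : {k : ℕ | ∃ x : Fin n → ℝ, x ≠ 0 ∧ l0 (A.mulVec x) = k}.Nonempty := by
    refine ⟨l0 (A.mulVec fun _ => 1), fun _ => (1 : ℝ), ?_, rfl⟩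
    intro h
    have : (1 : ℝ) = 0 := congrFun h ⟨0, hn⟩
    norm_num at this
  obtain ⟨x, hx, hxl⟩ := Nat.sInf_mem hne
  have key : ∀ B : Matrix (Fin m) (Fin n) ℝ, HasPattern S B → cospark B ≤ cospark A := by
    intro B hB
    set T : Finset (Fin m) := Finset.univ.filter (fun i => A.mulVec x i = 0) with hT
    have hAT : (rowRestrict A T).mulVec x = 0 := by
      funext i
      rw [rowRestrict, rowRestrict_mulVec]
      by_cases hi : i ∈ T
      · simp only [hi, if_true]
        simpa [hT] using hi
      · simp [hi]
    have h1 : (rowRestrict A T).rank < n := rank_lt_of_ker _ hx hAT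
    have hBpat : HasPattern (patternOn S T) (rowRestrict B T) := by
      intro i j
      by_cases hi : i ∈ T <;> simp [rowRestrict, patternOn, hi, hB i j]
    have bdd : BddAbove {r : ℕ | ∃ C : Matrix (Fin m) (Fin n) ℝ,
        HasPattern (patternOn S T) C ∧ C.rank = r} := by
      refine ⟨n, fun r hr => ?_⟩
      obtain ⟨C, _, hC⟩ := hr
      exact hC ▸ Matrix.rank_le_width C
    have h2 : (rowRestrict B T).rank ≤ sprank (patternOn S T) :=
      le_csSup bdd ⟨rowRestrict B T, hBpat, rfl⟩
    rw [← hmatch T] at h2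
    obtain ⟨y, hy, hBy⟩ := exists_ker _ (lt_of_le_of_lt h2 h1)
    have hsub : (Finset.univ.filter (fun i => B.mulVec y i ≠ 0)) ⊆
        (Finset.univ.filter (fun i => A.mulVec x i ≠ 0)) := by
      intro i hi
      simp only [Finset.mem_filter, Finset.mem_univ, true_and] at hi ⊢
      intro hiA
      have hiT : i ∈ T := by simp [hT, hiA]
      have := congrFun hBy i
      rw [rowRestrict, rowRestrict_mulVec] at this
      simp [hiT] at this
      exact hi this
    have hl0 : l0 (B.mulVec y) ≤ l0 (A.mulVec x) := Finset.card_le_card hsub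
    calc cospark B ≤ l0 (B.mulVec y) := Nat.sInf_le ⟨y, hy, rfl⟩
      _ ≤ l0 (A.mulVec x) := hl0
      _ = cospark A := hxl
  have memA : cospark A ∈ {k : ℕ | ∃ B : Matrix (Fin m) (Fin n) ℝ,
      HasPattern S B ∧ cospark B = k} := ⟨A, hA, rfl⟩
  have bddA : ∀ k ∈ {k : ℕ | ∃ B : Matrix (Fin m) (Fin n) ℝ,
      HasPattern S B ∧ cospark B = k}, k ≤ cospark A := by
    rintro k ⟨B, hB, rfl⟩
    exact key B hB
  exact le_antisymm (le_csSup ⟨cospark A, bddA⟩ memA) (csSup_le ⟨_, memA⟩ bddA)
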